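/- Let E : ℕ → ℕ be a finitely supported function and let c* be a positive integer. Define the real numbers m = Σ_c E(c), B = Σ_c E(c)·min(1, c/c*), and D = Σ_{c ≤ c*} E(c)·(c* − c)/c*. Assume that Σ_{c < c*} E(c) > 0 and that there exists some c ≥ 1 with E(c) > 0 (so that B > 0). Then for all real numbers a, k with 0 < a < 1 and k > 1, the equation a·(x/m)^k = (x − B)/D has exactly one solution x in the open interval (0, m). -/

import Mathlib

/-- For a finitely supported `E : ℕ → ℕ` and positive `c*`, with
`m = Σ_c E(c)`, `B = Σ_c E(c)·min(1, c/c*)`, `D = Σ_{c ≤ c*} E(c)·(c* − c)/c*`,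
if `Σ_{c < c*} E(c) > 0` and some `c ≥ 1` has `E(c) > 0`, then for all reals
`0 < a < 1` and `k > 1`, the equation `a·(x/m)^k = (x − B)/D` has exactly one
solution `x ∈ (0, m)`. -/
theorem stmt0 (E : ℕ →₀ ℕ) (cstar : ℕ) (hcstar : 0 < cstar)
    (hpos : 0 < ∑ c ∈ Finset.range cstar, E c)
    (hne : ∃ c, 1 ≤ c ∧ 0 < E c) :
    ∀ a k : ℝ, 0 < a → a < 1 → 1 < k →
      ∃! x : ℝ,
        x ∈ Set.Ioo (0 : ℝ) (∑ c ∈ E.support, (E c : ℝ)) ∧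
        a * (x / ∑ c ∈ E.support, (E c : ℝ)) ^ k =
          (x - ∑ c ∈ E.support, (E c : ℝ) * min 1 ((c : ℝ) / (cstar : ℝ))) /
          (∑ c ∈ Finset.range (cstar + 1),
            (E c : ℝ) * ((cstar : ℝ) - (c : ℝ)) / (cstar : ℝ)) := by
  intro a k ha ha1 hk
  have hk0 : (0:ℝ) < k := lt_trans one_pos hk
  have hcs : (0:ℝ) < (cstar : ℝ) := by exact_mod_cast hcstar
  set m : ℝ := ∑ c ∈ E.support, (E c : ℝ) with hm
  set B : ℝ := ∑ c ∈ E.support, (E c : ℝ) * min 1 ((c : ℝ) / (cstar : ℝ)) with hB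
  set D : ℝ := ∑ c ∈ Finset.range (cstar + 1),
      (E c : ℝ) * ((cstar : ℝ) - (c : ℝ)) / (cstar : ℝ) with hD
  -- D > 0
  obtain ⟨c0, hc0mem, hc0⟩ : ∃ c ∈ Finset.range cstar, 0 < E c := by
    by_contra h
    push_neg at h
    have : ∑ c ∈ Finset.range cstar, E c = 0 :=
      Finset.sum_eq_zero fun c hc => Nat.le_zero.mp (h c hc)
    omega
  have hc0lt : c0 < cstar := Finset.mem_range.mp hc0mem
  have hDpos : 0 < D := by
    rw [hD]
    apply Finset.sum_pos'
    · intro c hc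
      have : c ≤ cstar := by
        have := Finset.mem_range.mp hc; omega
      have : (c : ℝ) ≤ (cstar : ℝ) := by exact_mod_cast this
      have h1 : (0:ℝ) ≤ (E c : ℝ) := by positivity
      have h2 : (0:ℝ) ≤ (cstar : ℝ) - c := by linarith
      positivity
    · refine ⟨c0, Finset.mem_range.mpr (by omega), ?_⟩
      have h1 : (0:ℝ) < (E c0 : ℝ) := by exact_mod_cast hc0
      have h2 : (c0 : ℝ) < (cstar : ℝ) := by exact_mod_cast hc0lt
      have h3 : (0:ℝ) < (cstar : ℝ) - c0 := by linarith
      positivity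
  -- B > 0
  obtain ⟨c1, hc1, hc1pos⟩ := hne
  have hBpos : 0 < B := by
    rw [hB]
    apply Finset.sum_pos'
    · intro c _
      have h1 : (0:ℝ) ≤ (E c : ℝ) := by positivity
      have h2 : (0:ℝ) ≤ min 1 ((c:ℝ)/(cstar:ℝ)) := le_min one_pos.le (by positivity)
      positivity
    · refine ⟨c1, Finsupp.mem_support_iff.mpr (by omega), ?_⟩
      have h1 : (0:ℝ) < (E c1 : ℝ) := by exact_mod_cast hc1pos
      have h2 : (0:ℝ) < (c1 : ℝ) := by exact_mod_cast hc1
      have h3 : (0:ℝ) < min 1 ((c1:ℝ)/(cstar:ℝ)) := lt_min one_pos (by positivity)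
      positivity
  -- m - B = D
  have hmBD : m - B = D := by
    have g_eq : ∀ c ∈ Finset.range (cstar + 1),
        (E c : ℝ) * ((cstar : ℝ) - (c : ℝ)) / (cstar : ℝ)
          = (E c : ℝ) * (1 - min 1 ((c:ℝ)/(cstar:ℝ))) := by
      intro c hc
      have hcle : c ≤ cstar := by have := Finset.mem_range.mp hc; omega
      have hcle' : (c : ℝ) ≤ (cstar : ℝ) := by exact_mod_cast hcle
      have hmin : min 1 ((c:ℝ)/(cstar:ℝ)) = (c:ℝ)/(cstar:ℝ) :=
        min_eq_right ((div_le_one hcs).mpr hcle')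
      rw [hmin]
      field_simp
    have hsub : m - B = ∑ c ∈ E.support, (E c : ℝ) * (1 - min 1 ((c:ℝ)/(cstar:ℝ))) := by
      rw [hm, hB, ← Finset.sum_sub_distrib]
      exact Finset.sum_congr rfl fun c _ => by ring
    have hU1 : ∑ c ∈ E.support, (E c : ℝ) * (1 - min 1 ((c:ℝ)/(cstar:ℝ)))
        = ∑ c ∈ E.support ∪ Finset.range (cstar + 1),
            (E c : ℝ) * (1 - min 1 ((c:ℝ)/(cstar:ℝ))) := by
      apply Finset.sum_subset Finset.subset_union_left
      intro c _ hc
      rw [Finsupp.notMem_support_iff.mp hc]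
      simp
    have hU2 : ∑ c ∈ Finset.range (cstar + 1), (E c : ℝ) * (1 - min 1 ((c:ℝ)/(cstar:ℝ)))
        = ∑ c ∈ E.support ∪ Finset.range (cstar + 1),
            (E c : ℝ) * (1 - min 1 ((c:ℝ)/(cstar:ℝ))) := by
      apply Finset.sum_subset Finset.subset_union_right
      intro c _ hc
      have hgt : cstar < c := by
        have := Finset.mem_range.not.mp hc; omega
      have hgt' : (cstar : ℝ) < (c : ℝ) := by exact_mod_cast hgt
      have hmin : min 1 ((c:ℝ)/(cstar:ℝ)) = 1 :=
        min_eq_left ((one_le_div hcs).mpr hgt'.le)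
      rw [hmin]
      ring
    rw [hsub, hU1, ← hU2, hD]
    exact (Finset.sum_congr rfl g_eq).symm
  have hmpos : 0 < m := by linarith
  have hBm : B < m := by linarith
  have hM : 0 < m ^ k := Real.rpow_pos_of_pos hmpos k
  have hmm : (m / m) ^ k = 1 := by rw [div_self hmpos.ne', Real.one_rpow]
  -- uniqueness key lemma
  have key : ∀ x1 x2 : ℝ, x1 ∈ Set.Ioo (0:ℝ) m → x2 ∈ Set.Ioo (0:ℝ) m → x1 < x2 →
      a * (x1 / m) ^ k = (x1 - B) / D → a * (x2 / m) ^ k = (x2 - B) / D → False := by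
    intro x1 x2 h1 h2 hlt e1 e2
    have hmx1 : 0 < m - x1 := by linarith [h2.2, hlt]
    set t : ℝ := (m - x2) / (m - x1) with ht_def
    set s : ℝ := (x2 - x1) / (m - x1) with hs_def
    have ht : 0 < t := div_pos (by linarith [h2.2]) hmx1
    have hs : 0 < s := div_pos (by linarith) hmx1
    have hts : t + s = 1 := by
      rw [ht_def, hs_def, ← add_div]
      field_simp
      ring
    have hcomb : t * x1 + s * m = x2 := by
      rw [ht_def, hs_def]
      field_simp
      ring
    have hx1m : x1 ≠ m := by linarith [h2.2]
    have hconv := strictConvexOn_rpow hk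
    have hineq := hconv.2 (Set.mem_Ici.mpr h1.1.le) (Set.mem_Ici.mpr hmpos.le)
      hx1m ht hs hts
    simp only [smul_eq_mul] at hineq
    rw [hcomb] at hineq
    -- hineq : x2 ^ k < t * x1 ^ k + s * m ^ k
    have hd1 : (x1 / m) ^ k = x1 ^ k / m ^ k := Real.div_rpow h1.1.le hmpos.le k
    have hd2 : (x2 / m) ^ k = x2 ^ k / m ^ k := Real.div_rpow h2.1.le hmpos.le k
    rw [hd1] at e1
    rw [hd2] at e2
    have c2 : a * (x2 ^ k / m ^ k) < t * (a * (x1 ^ k / m ^ k)) + s * a := by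
      calc a * (x2 ^ k / m ^ k) = a / m ^ k * x2 ^ k := by ring
        _ < a / m ^ k * (t * x1 ^ k + s * m ^ k) :=
            mul_lt_mul_of_pos_left hineq (by positivity)
        _ = t * (a * (x1 ^ k / m ^ k)) + s * a := by field_simp
    rw [e1, e2] at c2
    have c1 : (x2 - B) / D = t * ((x1 - B) / D) + s := by
      have hDm : (m - B) / D = 1 := by rw [hmBD, div_self hDpos.ne']
      have : t * ((x1 - B) / D) + s * ((m - B) / D) = (x2 - B) / D := by
        rw [← mul_div_assoc, ← mul_div_assoc, ← add_div]
        congr 1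
        linear_combination hcomb - B * hts
      rw [hDm, mul_one] at this
      linarith
    have hsas : s * a < s := by nlinarith
    linarith
  -- existence via IVT
  set g : ℝ → ℝ := fun x => a * (x / m) ^ k - (x - B) / D with hg_def
  have hg_cont : Continuous g := by
    have h1 : Continuous fun x : ℝ => (x / m) ^ k :=
      (continuous_id.div_const m).rpow_const fun x => Or.inr hk0.le
    exact (continuous_const.mul h1).sub ((continuous_id.sub continuous_const).div_const D)
  have hgB : 0 < g B := by
    have : g B = a * (B / m) ^ k := by
      simp [hg_def]
    rw [this]
    have : (0:ℝ) < (B / m) ^ k := Real.rpow_pos_of_pos (div_pos hBpos hmpos) k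
    positivity
  have hgm : g m < 0 := by
    have : g m = a - 1 := by
      simp only [hg_def, hmm, mul_one, hmBD, div_self hDpos.ne']
    rw [this]; linarith
  obtain ⟨x, hx, hgx⟩ := intermediate_value_Ioo' hBm.le hg_cont.continuousOn
    (Set.mem_Ioo.mpr ⟨hgm, hgB⟩)
  have hxmem : x ∈ Set.Ioo (0:ℝ) m := ⟨lt_trans hBpos hx.1, hx.2⟩
  have hxeq : a * (x / m) ^ k = (x - B) / D := by
    have : a * (x / m) ^ k - (x - B) / D = 0 := hgx
    linarith
  refine ⟨x, ⟨hxmem, hxeq⟩, ?_⟩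
  intro y ⟨hymem, hyeq⟩
  rcases lt_trichotomy y x with h | h | h
  · exact absurd (key y x hymem hxmem h hyeq hxeq) (fun f => f.elim)
  · exact h
  · exact absurd (key x y hxmem hymem h hxeq hyeq) (fun f => f.elim)
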